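/- arXiv:2601.16970 — 4 statements merged into one kernel-verified Lean document; each statement's English description precedes it below -/
import Mathlib

section
/- Let H be a symmetric positive-definite d×d real matrix, x₁* ≠ x₂* ∈ ℝ^d, s₁, s₂ > 0, p > 0, y₁*, y₂* ∈ ℝ, and define the peak functions f_i(x) = s_i · (½ (x − x_i*)ᵀ H (x − x_i*))^{p/2} + y_i* for i = 1, 2 (with identical Hessian H and identical exponent p). Let Δ = (x₂* − x₁*)ᵀ H (x₂* − x₁*). Then for every t ∈ [0,1], at the Pareto-set point x_t = (1 − t) x₁* + t x₂* one has ((f₁(x_t) − y₁*)/s₁)^{1/p} + ((f₂(x_t) − y₂*)/s₂)^{1/p} = (Δ/2)^{1/2}; in particular, for p = 1 the Pareto front is a line segment in the objective space. -/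
open Matrix

/-- For two peak functions sharing the same symmetric positive-definite
Hessian `H` and the same exponent `p`, along the Pareto set `x_t = (1−t)x₁* + tx₂*`,
`t ∈ [0,1]`, with `Δ = (x₂* − x₁*)ᵀ H (x₂* − x₁*)`, one has
`((f₁(x_t) − y₁*)/s₁)^{1/p} + ((f₂(x_t) − y₂*)/s₂)^{1/p} = (Δ/2)^{1/2}`;
in particular for `p = 1` the Pareto front is a line segment in the objective space. -/
theorem same_hessian_peak_front_equation {d : ℕ}
    (H : Matrix (Fin d) (Fin d) ℝ) (hH : H.PosDef)
    (x₁ x₂ : Fin d → ℝ) (hx : x₁ ≠ x₂)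
    (s₁ s₂ p : ℝ) (hs₁ : 0 < s₁) (hs₂ : 0 < s₂) (hp : 0 < p)
    (y₁ y₂ : ℝ) (f₁ f₂ : (Fin d → ℝ) → ℝ)
    (hf₁ : ∀ x, f₁ x =
      s₁ * ((1 / 2) * ((x - x₁) ⬝ᵥ H.mulVec (x - x₁))) ^ (p / 2) + y₁)
    (hf₂ : ∀ x, f₂ x =
      s₂ * ((1 / 2) * ((x - x₂) ⬝ᵥ H.mulVec (x - x₂))) ^ (p / 2) + y₂)
    (Δ : ℝ) (hΔ : Δ = (x₂ - x₁) ⬝ᵥ H.mulVec (x₂ - x₁)) :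
    (∀ t ∈ Set.Icc (0 : ℝ) 1,
      ((f₁ ((1 - t) • x₁ + t • x₂) - y₁) / s₁) ^ (1 / p) +
        ((f₂ ((1 - t) • x₁ + t • x₂) - y₂) / s₂) ^ (1 / p) =
          (Δ / 2) ^ ((1 : ℝ) / 2)) ∧
    (p = 1 →
      (fun t : ℝ => (f₁ ((1 - t) • x₁ + t • x₂), f₂ ((1 - t) • x₁ + t • x₂))) ''
          Set.Icc (0 : ℝ) 1 =
        segment ℝ (f₁ x₁, f₂ x₁) (f₁ x₂, f₂ x₂)) := by
  set v : Fin d → ℝ := x₂ - x₁ with hv_def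
  have hv : v ≠ 0 := sub_ne_zero.mpr (Ne.symm hx)
  have hΔpos : 0 < Δ := by
    rw [hΔ]
    have := hH.dotProduct_mulVec_pos hv
    simpa using this
  -- quadratic form scaling
  have hquad : ∀ c : ℝ, (c • v) ⬝ᵥ H.mulVec (c • v) = c ^ 2 * Δ := by
    intro c
    rw [hΔ, mulVec_smul, smul_dotProduct, dotProduct_smul, smul_eq_mul, smul_eq_mul]
    ring
  have hsub₁ : ∀ t : ℝ, (1 - t) • x₁ + t • x₂ - x₁ = t • v := by
    intro t; funext i
    simp [hv_def, Pi.smul_apply, Pi.sub_apply, Pi.add_apply]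
    ring
  have hsub₂ : ∀ t : ℝ, (1 - t) • x₁ + t • x₂ - x₂ = (t - 1) • v := by
    intro t; funext i
    simp [hv_def, Pi.smul_apply, Pi.sub_apply, Pi.add_apply]
    ring
  -- base value
  have hbase : ∀ c : ℝ, (1 / 2 : ℝ) * (c ^ 2 * Δ) = c ^ 2 * (Δ / 2) := by
    intro c; ring
  have hΔ2 : (0 : ℝ) ≤ Δ / 2 := by linarith
  have sqrt_helper : ∀ c : ℝ, 0 ≤ c →
      ((1 / 2 : ℝ) * (c ^ 2 * Δ)) ^ ((1 : ℝ) / 2) = c * (Δ / 2) ^ ((1 : ℝ) / 2) := by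
    intro c hc
    rw [hbase, Real.mul_rpow (sq_nonneg c) hΔ2]
    congr 1
    rw [← Real.rpow_natCast c 2, ← Real.rpow_mul hc]
    norm_num
  have hbase_nonneg : ∀ c : ℝ, (0 : ℝ) ≤ (1 / 2 : ℝ) * (c ^ 2 * Δ) := by
    intro c
    have := sq_nonneg c
    positivity
  -- f values along the segment
  have hf₁t : ∀ t : ℝ, f₁ ((1 - t) • x₁ + t • x₂) =
      s₁ * ((1 / 2 : ℝ) * (t ^ 2 * Δ)) ^ (p / 2) + y₁ := by
    intro t; rw [hf₁, hsub₁, hquad]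
  have hf₂t : ∀ t : ℝ, f₂ ((1 - t) • x₁ + t • x₂) =
      s₂ * ((1 / 2 : ℝ) * ((1 - t) ^ 2 * Δ)) ^ (p / 2) + y₂ := by
    intro t; rw [hf₂, hsub₂, hquad]
    ring_nf
  have pow_helper : ∀ c : ℝ, 0 ≤ c →
      (((1 / 2 : ℝ) * (c ^ 2 * Δ)) ^ (p / 2)) ^ ((1 : ℝ) / p) =
        c * (Δ / 2) ^ ((1 : ℝ) / 2) := by
    intro c hc
    rw [← Real.rpow_mul (hbase_nonneg c)]
    have hpe : p / 2 * (1 / p) = 1 / 2 := by field_simp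
    rw [hpe]
    exact sqrt_helper c hc
  constructor
  · intro t ht
    obtain ⟨ht0, ht1⟩ := ht
    rw [hf₁t, hf₂t]
    rw [add_sub_cancel_right, add_sub_cancel_right,
      mul_div_cancel_left₀ _ (ne_of_gt hs₁), mul_div_cancel_left₀ _ (ne_of_gt hs₂)]
    rw [pow_helper t ht0, pow_helper (1 - t) (by linarith)]
    ring
  · intro hp1
    rw [segment_eq_image]
    apply Set.image_congr
    intro t ht
    obtain ⟨ht0, ht1⟩ := ht
    have e₁ : f₁ x₁ = y₁ := by
      rw [hf₁]; simp [Real.zero_rpow (by positivity : p / 2 ≠ 0)]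
    have e₂ : f₂ x₂ = y₂ := by
      rw [hf₂]; simp [Real.zero_rpow (by positivity : p / 2 ≠ 0)]
    have e₃ : f₁ x₂ = s₁ * (Δ / 2) ^ ((1 : ℝ) / 2) + y₁ := by
      have h := hf₁t 1
      rw [hp1, sqrt_helper 1 zero_le_one] at h
      simpa using h
    have e₄ : f₂ x₁ = s₂ * (Δ / 2) ^ ((1 : ℝ) / 2) + y₂ := by
      have h := hf₂t 0
      rw [hp1, show ((1:ℝ) - 0) = 1 by norm_num, sqrt_helper 1 zero_le_one] at h
      simpa using h
    have g₁ : f₁ ((1 - t) • x₁ + t • x₂) = s₁ * (t * (Δ / 2) ^ ((1 : ℝ) / 2)) + y₁ := by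
      rw [hf₁t t, hp1, sqrt_helper t ht0]
    have g₂ : f₂ ((1 - t) • x₁ + t • x₂) = s₂ * ((1 - t) * (Δ / 2) ^ ((1 : ℝ) / 2)) + y₂ := by
      rw [hf₂t t, hp1, sqrt_helper (1 - t) (by linarith)]
    simp only [g₁, g₂, e₁, e₂, e₃, e₄, Prod.smul_mk, Prod.mk_add_mk, smul_eq_mul, Prod.mk.injEq]
    constructor <;> ring
end

section
/- Let f₁, f₂ be convex-quadratic functions on ℝ^d with symmetric positive-definite Hessians H₁, H₂ and optima x₁*, x₂*, and for t ∈ [0,1] let x_t* = ((1 − t) H₁ + t H₂)⁻¹ ((1 − t) H₁ x₁* + t H₂ x₂*). Then the map t ↦ f₁(x_t*) is monotonically nondecreasing on [0,1] and the map t ↦ f₂(x_t*) is monotonically nonincreasing on [0,1]. -/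
open Matrix

lemma aux_symdot {d : ℕ} {H : Matrix (Fin d) (Fin d) ℝ} (hH : H.IsHermitian) (u v : Fin d → ℝ) :
    u ⬝ᵥ H *ᵥ v = v ⬝ᵥ H *ᵥ u := by
  rw [dotProduct_mulVec, ← mulVec_transpose, show Hᵀ = H from hH]
  exact dotProduct_comm _ _

lemma aux_expand {d : ℕ} {H : Matrix (Fin d) (Fin d) ℝ} (hH : H.IsHermitian) (a p : Fin d → ℝ) :
    (a + p) ⬝ᵥ H *ᵥ (a + p) = a ⬝ᵥ H *ᵥ a + 2 * (p ⬝ᵥ H *ᵥ a) + p ⬝ᵥ H *ᵥ p := by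
  rw [mulVec_add, dotProduct_add, add_dotProduct, add_dotProduct,
    aux_symdot hH a p]
  ring

lemma aux_posdef {d : ℕ} {H₁ H₂ : Matrix (Fin d) (Fin d) ℝ} (hH₁ : H₁.PosDef) (hH₂ : H₂.PosDef)
    {t : ℝ} (h0 : 0 ≤ t) (h1 : t ≤ 1) : ((1 - t) • H₁ + t • H₂).PosDef := by
  rw [posDef_iff_dotProduct_mulVec]
  constructor
  · simp only [Matrix.IsHermitian, conjTranspose_add, conjTranspose_smul, star_trivial]
    rw [show H₁ᴴ = H₁ from hH₁.1, show H₂ᴴ = H₂ from hH₂.1]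
  · intro x hx
    have e : ∀ y : Fin d → ℝ, y ⬝ᵥ ((1 - t) • H₁ + t • H₂) *ᵥ y
        = (1 - t) * (y ⬝ᵥ H₁ *ᵥ y) + t * (y ⬝ᵥ H₂ *ᵥ y) := by
      intro y
      rw [add_mulVec, dotProduct_add, smul_mulVec, smul_mulVec,
        dotProduct_smul, dotProduct_smul]
      simp [smul_eq_mul]
    simp only [star_trivial, e]
    have p1 := hH₁.dotProduct_mulVec_pos hx
    have p2 := hH₂.dotProduct_mulVec_pos hx
    simp only [star_trivial] at p1 p2
    rcases lt_or_eq_of_le h1 with h | h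
    · nlinarith [mul_nonneg h0 p2.le]
    · subst h; simpa using p2

/-- Along the curve of weighted-sum minimizers
`x_t* = ((1−t)H₁ + tH₂)⁻¹((1−t)H₁x₁* + tH₂x₂*)` of two convex-quadratic objectives,
`t ↦ f₁(x_t*)` is monotonically nondecreasing and `t ↦ f₂(x_t*)` is monotonically
nonincreasing on `[0,1]`. -/
theorem objective_monotone_along_pareto_curve {d : ℕ}
    (H₁ H₂ : Matrix (Fin d) (Fin d) ℝ) (hH₁ : H₁.PosDef) (hH₂ : H₂.PosDef)
    (x₁ x₂ : Fin d → ℝ) (y₁ y₂ : ℝ)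
    (f₁ f₂ : (Fin d → ℝ) → ℝ)
    (hf₁ : ∀ x, f₁ x = (1 / 2) * ((x - x₁) ⬝ᵥ H₁.mulVec (x - x₁)) + y₁)
    (hf₂ : ∀ x, f₂ x = (1 / 2) * ((x - x₂) ⬝ᵥ H₂.mulVec (x - x₂)) + y₂)
    (xt : ℝ → (Fin d → ℝ))
    (hxt : ∀ t, xt t = ((1 - t) • H₁ + t • H₂)⁻¹.mulVec
      ((1 - t) • H₁.mulVec x₁ + t • H₂.mulVec x₂)) :
    MonotoneOn (fun t => f₁ (xt t)) (Set.Icc (0 : ℝ) 1) ∧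
      AntitoneOn (fun t => f₂ (xt t)) (Set.Icc (0 : ℝ) 1) := by
  -- Key: xt t minimizes (1-t)·f₁ + t·f₂
  have key : ∀ t ∈ Set.Icc (0:ℝ) 1, ∀ y,
      (1 - t) * f₁ (xt t) + t * f₂ (xt t) ≤ (1 - t) * f₁ y + t * f₂ y := by
    intro t ht y
    set Ht := (1 - t) • H₁ + t • H₂ with hHt
    have hpd : Ht.PosDef := aux_posdef hH₁ hH₂ ht.1 ht.2
    have hdet : IsUnit Ht.det := isUnit_iff_ne_zero.mpr hpd.det_pos.ne'
    have hstat : Ht *ᵥ (xt t) = (1 - t) • H₁ *ᵥ x₁ + t • H₂ *ᵥ x₂ := by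
      rw [hxt t, mulVec_mulVec, mul_nonsing_inv _ hdet, one_mulVec]
    set p := y - xt t with hp
    have hcross : (1 - t) * (p ⬝ᵥ H₁ *ᵥ (xt t - x₁)) + t * (p ⬝ᵥ H₂ *ᵥ (xt t - x₂)) = 0 := by
      have hv : (1 - t) • (H₁ *ᵥ (xt t - x₁)) + t • (H₂ *ᵥ (xt t - x₂))
          = Ht *ᵥ xt t - ((1 - t) • H₁ *ᵥ x₁ + t • H₂ *ᵥ x₂) := by
        rw [mulVec_sub, mulVec_sub, hHt, add_mulVec, smul_mulVec, smul_mulVec]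
        module
      calc (1 - t) * (p ⬝ᵥ H₁ *ᵥ (xt t - x₁)) + t * (p ⬝ᵥ H₂ *ᵥ (xt t - x₂))
          = p ⬝ᵥ ((1 - t) • (H₁ *ᵥ (xt t - x₁)) + t • (H₂ *ᵥ (xt t - x₂))) := by
            rw [dotProduct_add, dotProduct_smul, dotProduct_smul]; simp [smul_eq_mul]
        _ = p ⬝ᵥ (0 : Fin d → ℝ) := by rw [hv, hstat, sub_self]
        _ = 0 := dotProduct_zero p
    have hq : 0 ≤ (1 - t) * (p ⬝ᵥ H₁ *ᵥ p) + t * (p ⬝ᵥ H₂ *ᵥ p) := by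
      have q1 := hH₁.posSemidef.dotProduct_mulVec_nonneg p
      have q2 := hH₂.posSemidef.dotProduct_mulVec_nonneg p
      simp only [star_trivial] at q1 q2
      have := mul_nonneg (by linarith [ht.2] : (0:ℝ) ≤ 1 - t) q1
      have := mul_nonneg ht.1 q2
      linarith
    have e1 : (y - x₁) ⬝ᵥ H₁ *ᵥ (y - x₁)
        = (xt t - x₁) ⬝ᵥ H₁ *ᵥ (xt t - x₁) + 2 * (p ⬝ᵥ H₁ *ᵥ (xt t - x₁)) + p ⬝ᵥ H₁ *ᵥ p := by
      rw [show y - x₁ = (xt t - x₁) + p by rw [hp]; abel]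
      exact aux_expand hH₁.1 _ _
    have e2 : (y - x₂) ⬝ᵥ H₂ *ᵥ (y - x₂)
        = (xt t - x₂) ⬝ᵥ H₂ *ᵥ (xt t - x₂) + 2 * (p ⬝ᵥ H₂ *ᵥ (xt t - x₂)) + p ⬝ᵥ H₂ *ᵥ p := by
      rw [show y - x₂ = (xt t - x₂) + p by rw [hp]; abel]
      exact aux_expand hH₂.1 _ _
    rw [hf₁, hf₁, hf₂, hf₂, e1, e2]
    nlinarith [hcross, hq]
  constructor
  · intro s hs t ht hst
    rcases eq_or_lt_of_le hst with rfl | hlt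
    · exact le_refl _
    have h1 := key s hs (xt t)
    have h2 := key t ht (xt s)
    simp only
    nlinarith [mul_le_mul_of_nonneg_left h1 ht.1, mul_le_mul_of_nonneg_left h2 hs.1,
      mul_pos (sub_pos.mpr hlt) (sub_pos.mpr hlt)]
  · intro s hs t ht hst
    rcases eq_or_lt_of_le hst with rfl | hlt
    · exact le_refl _
    have h1 := key s hs (xt t)
    have h2 := key t ht (xt s)
    simp only
    nlinarith [mul_le_mul_of_nonneg_left h1 (by linarith [ht.2] : (0:ℝ) ≤ 1 - t),
      mul_le_mul_of_nonneg_left h2 (by linarith [hs.2] : (0:ℝ) ≤ 1 - s)]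
end

section
/- Let g₁, …, g_J and h₁, …, h_K be convex-quadratic functions on ℝ^d, where g_j has symmetric positive-definite Hessian A_j and optimum a_j, and h_k has symmetric positive-definite Hessian B_k and optimum b_k. Define f₁(x) = min_j g_j(x) and f₂(x) = min_k h_k(x). Then every Pareto-optimal point x of F = (f₁, f₂) lies in the union of the parametrized Pareto sets of the peak pairs: there exist indices j, k and t ∈ [0,1] such that x = ((1 − t) A_j + t B_k)⁻¹ ((1 − t) A_j a_j + t B_k b_k). -/
open Matrix

lemma dps {d : ℕ} {u : Fin d → ℝ} (hu : u ≠ 0) : 0 < u ⬝ᵥ u := by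
  have h0 : 0 ≤ u ⬝ᵥ u := Finset.sum_nonneg fun i _ => mul_self_nonneg _
  rcases h0.lt_or_eq with h | h
  · exact h
  · exact absurd (dotProduct_self_eq_zero.mp h.symm) hu

lemma dot_pos {d : ℕ} {M : Matrix (Fin d) (Fin d) ℝ} (hM : M.PosDef)
    {w : Fin d → ℝ} (hw : w ≠ 0) : 0 < w ⬝ᵥ M *ᵥ w := by
  have := hM.dotProduct_mulVec_pos hw
  simpa using this

lemma dot_sym {d : ℕ} {M : Matrix (Fin d) (Fin d) ℝ} (hM : M.IsHermitian)
    (x y : Fin d → ℝ) : x ⬝ᵥ M *ᵥ y = y ⬝ᵥ M *ᵥ x := by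
  have hMt : Mᵀ = M := by
    have := hM.eq
    rwa [Matrix.conjTranspose_eq_transpose_of_trivial] at this
  rw [dotProduct_mulVec, ← mulVec_transpose, hMt, dotProduct_comm]

lemma quad_exp {d : ℕ} {M : Matrix (Fin d) (Fin d) ℝ} (hM : M.IsHermitian)
    (y w : Fin d → ℝ) (s : ℝ) :
    (y + s • w) ⬝ᵥ M *ᵥ (y + s • w) =
      y ⬝ᵥ M *ᵥ y + 2*s*(w ⬝ᵥ M *ᵥ y) + s^2*(w ⬝ᵥ M *ᵥ w) := by
  have hsym : y ⬝ᵥ M *ᵥ w = w ⬝ᵥ M *ᵥ y := dot_sym hM y w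
  simp only [mulVec_add, Matrix.mulVec_smul, dotProduct_add, add_dotProduct,
    dotProduct_smul, smul_dotProduct, smul_eq_mul, hsym]
  ring

lemma gordan2 {d : ℕ} (u v : Fin d → ℝ) :
    (∃ t ∈ Set.Icc (0:ℝ) 1, (1-t) • u + t • v = 0) ∨
    (∃ w : Fin d → ℝ, u ⬝ᵥ w < 0 ∧ v ⬝ᵥ w < 0) := by
  set α := u ⬝ᵥ u with hα
  set β := u ⬝ᵥ v with hβ
  set γ := v ⬝ᵥ v with hγ
  have hvu : v ⬝ᵥ u = β := dotProduct_comm v u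
  by_cases h1 : α ≤ β
  · by_cases hu : u = 0
    · exact Or.inl ⟨0, ⟨le_refl 0, zero_le_one⟩, by simp [hu]⟩
    · have hup : 0 < α := dps hu
      refine Or.inr ⟨-u, ?_, ?_⟩ <;> simp only [dotProduct_neg, hvu, ← hα] <;> nlinarith
  by_cases h2 : γ ≤ β
  · by_cases hv : v = 0
    · exact Or.inl ⟨1, ⟨zero_le_one, le_refl 1⟩, by simp [hv]⟩
    · have hvp : 0 < γ := dps hv
      refine Or.inr ⟨-v, ?_, ?_⟩ <;> simp only [dotProduct_neg, hvu, ← hβ, ← hγ] <;> nlinarith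
  push_neg at h1 h2
  have hN : 0 < α - 2*β + γ := by nlinarith
  set N := α - 2*β + γ with hNdef
  set t := (α - β) / N with ht
  have ht0 : 0 ≤ t := div_nonneg (by nlinarith) hN.le
  have ht1 : t ≤ 1 := by
    rw [div_le_one hN]; nlinarith
  set p := (1-t) • u + t • v with hp
  have hup : u ⬝ᵥ p = (1-t)*α + t*β := by
    simp [hp, dotProduct_add, dotProduct_smul, smul_eq_mul, hα, hβ]
  have hvp : v ⬝ᵥ p = (1-t)*β + t*γ := by
    simp [hp, dotProduct_add, dotProduct_smul, smul_eq_mul, hvu, hβ, hγ]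
  have heq : (1-t)*α + t*β = (1-t)*β + t*γ := by
    rw [ht]; field_simp; ring
  have hpp1 : p ⬝ᵥ p = (1-t)*(u ⬝ᵥ p) + t*(v ⬝ᵥ p) := by
    conv_lhs => rw [hp]
    rw [add_dotProduct, smul_dotProduct, smul_dotProduct, smul_eq_mul, smul_eq_mul]
  have hpp : p ⬝ᵥ p = (1-t)*α + t*β := by
    rw [hpp1, hup, hvp]; nlinarith [heq]
  by_cases hp0 : p = 0
  · exact Or.inl ⟨t, ⟨ht0, ht1⟩, hp0⟩
  · have hppos : 0 < p ⬝ᵥ p := dps hp0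
    refine Or.inr ⟨-p, ?_, ?_⟩ <;> simp only [dotProduct_neg, hup, hvp] <;> nlinarith

lemma combo_posdef {d : ℕ} {A B : Matrix (Fin d) (Fin d) ℝ}
    (hA : A.PosDef) (hB : B.PosDef) {t : ℝ} (ht0 : 0 ≤ t) (ht1 : t ≤ 1) :
    ((1-t) • A + t • B).PosDef := by
  rw [posDef_iff_dotProduct_mulVec]
  constructor
  · have : ((1-t) • A + t • B)ᴴ = (1-t) • Aᴴ + t • Bᴴ := by
      rw [conjTranspose_add, conjTranspose_smul, conjTranspose_smul,
        star_trivial, star_trivial]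
    rw [Matrix.IsHermitian, this, hA.1, hB.1]
  · intro z hz
    have hza := dot_pos hA hz
    have hzb := dot_pos hB hz
    have hcalc : star z ⬝ᵥ ((1-t) • A + t • B) *ᵥ z
        = (1-t)*(z ⬝ᵥ A *ᵥ z) + t*(z ⬝ᵥ B *ᵥ z) := by
      simp [add_mulVec, smul_mulVec, dotProduct_add, dotProduct_smul, smul_eq_mul]
    rw [hcalc]
    rcases ht0.lt_or_eq with htp | htz
    · have h1 : 0 < t * (z ⬝ᵥ B *ᵥ z) := mul_pos htp hzb
      have h2 : 0 ≤ (1-t) * (z ⬝ᵥ A *ᵥ z) := mul_nonneg (by linarith) hza.le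
      linarith
    · rw [← htz]; simpa using hza

/-- If `f₁ = min_j g_j` and `f₂ = min_k h_k` are pointwise minima of
finitely many convex-quadratic functions with symmetric positive-definite Hessians
`A_j` (resp. `B_k`) and optima `a_j` (resp. `b_k`), then every Pareto-optimal point of
`F = (f₁, f₂)` lies in the union of the parametrized Pareto sets of the peak pairs:
`x = ((1−t)A_j + tB_k)⁻¹((1−t)A_j a_j + tB_k b_k)` for some `j, k` and `t ∈ [0,1]`. -/
theorem pareto_set_subset_union_of_peak_pair_curves {d J K : ℕ}
    (hJ : 1 ≤ J) (hK : 1 ≤ K)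
    (A : Fin J → Matrix (Fin d) (Fin d) ℝ) (hA : ∀ j, (A j).PosDef)
    (B : Fin K → Matrix (Fin d) (Fin d) ℝ) (hB : ∀ k, (B k).PosDef)
    (a : Fin J → (Fin d → ℝ)) (b : Fin K → (Fin d → ℝ))
    (ya : Fin J → ℝ) (yb : Fin K → ℝ)
    (g : Fin J → (Fin d → ℝ) → ℝ) (h : Fin K → (Fin d → ℝ) → ℝ)
    (hg : ∀ j x, g j x =
      (1 / 2) * ((x - a j) ⬝ᵥ (A j).mulVec (x - a j)) + ya j)
    (hh : ∀ k x, h k x =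
      (1 / 2) * ((x - b k) ⬝ᵥ (B k).mulVec (x - b k)) + yb k)
    (f₁ f₂ : (Fin d → ℝ) → ℝ)
    (hf₁ : ∀ x, f₁ x =
      Finset.univ.inf' ⟨⟨0, hJ⟩, Finset.mem_univ _⟩ (fun j => g j x))
    (hf₂ : ∀ x, f₂ x =
      Finset.univ.inf' ⟨⟨0, hK⟩, Finset.mem_univ _⟩ (fun k => h k x))
    (x : Fin d → ℝ)
    (hx : ¬ ∃ x' : Fin d → ℝ,
      f₁ x' ≤ f₁ x ∧ f₂ x' ≤ f₂ x ∧ (f₁ x' < f₁ x ∨ f₂ x' < f₂ x)) :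
    ∃ (j : Fin J) (k : Fin K), ∃ t ∈ Set.Icc (0 : ℝ) 1,
      x = ((1 - t) • A j + t • B k)⁻¹.mulVec
        ((1 - t) • (A j).mulVec (a j) + t • (B k).mulVec (b k)) := by
  obtain ⟨j, -, hjx⟩ := Finset.exists_mem_eq_inf'
    (⟨⟨0, hJ⟩, Finset.mem_univ _⟩ : (Finset.univ : Finset (Fin J)).Nonempty)
    (fun j => g j x)
  obtain ⟨k, -, hkx⟩ := Finset.exists_mem_eq_inf'
    (⟨⟨0, hK⟩, Finset.mem_univ _⟩ : (Finset.univ : Finset (Fin K)).Nonempty)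
    (fun k => h k x)
  have hf1x : f₁ x = g j x := by rw [hf₁ x]; exact hjx
  have hf2x : f₂ x = h k x := by rw [hf₂ x]; exact hkx
  set u := (A j) *ᵥ (x - a j) with hu
  set v := (B k) *ᵥ (x - b k) with hv
  rcases gordan2 u v with ⟨t, ⟨ht0, ht1⟩, hteq⟩ | ⟨w, hwu, hwv⟩
  · refine ⟨j, k, t, ⟨ht0, ht1⟩, ?_⟩
    set M := (1-t) • A j + t • B k with hM
    have hMpd : M.PosDef := combo_posdef (hA j) (hB k) ht0 ht1
    have hMx : M *ᵥ x = (1-t) • ((A j) *ᵥ (a j)) + t • ((B k) *ᵥ (b k)) := by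
      have h0 : (1-t) • ((A j) *ᵥ x - (A j) *ᵥ (a j))
          + t • ((B k) *ᵥ x - (B k) *ᵥ (b k)) = 0 := by
        rw [← mulVec_sub, ← mulVec_sub]
        exact hteq
      have hMx' : M *ᵥ x = (1-t) • ((A j) *ᵥ x) + t • ((B k) *ᵥ x) := by
        rw [hM, add_mulVec, smul_mulVec, smul_mulVec]
      rw [hMx', ← sub_eq_zero, ← h0]
      rw [smul_sub, smul_sub]
      abel
    have hdet : IsUnit M.det := isUnit_iff_ne_zero.mpr hMpd.det_pos.ne'
    rw [show ((1 - t) • A j + t • B k)⁻¹ = M⁻¹ from rfl, ← hMx,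
      mulVec_mulVec, Matrix.nonsing_inv_mul M hdet, one_mulVec]
  · exfalso
    have hw0 : w ≠ 0 := by rintro rfl; simp at hwu
    have hqa : 0 < w ⬝ᵥ (A j) *ᵥ w := dot_pos (hA j) hw0
    have hqb : 0 < w ⬝ᵥ (B k) *ᵥ w := dot_pos (hB k) hw0
    set s := min (-(u ⬝ᵥ w)/(w ⬝ᵥ (A j) *ᵥ w)) (-(v ⬝ᵥ w)/(w ⬝ᵥ (B k) *ᵥ w)) with hs
    have hs0 : 0 < s :=
      lt_min (div_pos (by linarith) hqa) (div_pos (by linarith) hqb)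
    set x' := x + s • w with hx'
    have hgj : g j x' < g j x := by
      rw [hg j x', hg j x]
      have hsub : x' - a j = (x - a j) + s • w := by rw [hx']; abel
      rw [hsub, quad_exp (hA j).1 (x - a j) w s]
      have hwu' : w ⬝ᵥ (A j) *ᵥ (x - a j) = u ⬝ᵥ w := by
        rw [hu, dotProduct_comm]
      rw [hwu']
      have hsle : s ≤ -(u ⬝ᵥ w)/(w ⬝ᵥ (A j) *ᵥ w) := min_le_left _ _
      rw [le_div_iff₀ hqa] at hsle
      nlinarith
    have hhk : h k x' < h k x := by
      rw [hh k x', hh k x]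
      have hsub : x' - b k = (x - b k) + s • w := by rw [hx']; abel
      rw [hsub, quad_exp (hB k).1 (x - b k) w s]
      have hwv' : w ⬝ᵥ (B k) *ᵥ (x - b k) = v ⬝ᵥ w := by
        rw [hv, dotProduct_comm]
      rw [hwv']
      have hsle : s ≤ -(v ⬝ᵥ w)/(w ⬝ᵥ (B k) *ᵥ w) := min_le_right _ _
      rw [le_div_iff₀ hqb] at hsle
      nlinarith
    have hf1 : f₁ x' < f₁ x := by
      rw [hf₁ x', hf1x]
      exact lt_of_le_of_lt (Finset.inf'_le _ (Finset.mem_univ j)) hgj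
    have hf2 : f₂ x' < f₂ x := by
      rw [hf₂ x', hf2x]
      exact lt_of_le_of_lt (Finset.inf'_le _ (Finset.mem_univ k)) hhk
    exact hx ⟨x', hf1.le, hf2.le, Or.inl hf1⟩
end

section
/- Let f₁, f₂ be convex-quadratic functions on ℝ^d with symmetric positive-definite Hessians H₁, H₂ and distinct optima x₁* ≠ x₂*, and for t ∈ [0,1] let x_t* = ((1 − t) H₁ + t H₂)⁻¹ ((1 − t) H₁ x₁* + t H₂ x₂*). Then for any t, t' ∈ [0,1] with x_t* ≠ x_{t'}*, the points x_t* and x_{t'}* are mutually nondominated under F = (f₁, f₂): neither dominates the other. -/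
open Matrix

private lemma smul_posSemidef_aux {d : ℕ} {H : Matrix (Fin d) (Fin d) ℝ} (hH : H.PosDef)
    {c : ℝ} (hc : 0 ≤ c) : (c • H).PosSemidef := by
  refine PosSemidef.of_dotProduct_mulVec_nonneg ?_ ?_
  · unfold Matrix.IsHermitian
    rw [conjTranspose_smul, hH.isHermitian]
    simp
  · intro x
    rw [smul_mulVec, dotProduct_smul]
    simpa using mul_nonneg hc (hH.posSemidef.dotProduct_mulVec_nonneg x)

private lemma smul_posDef_aux {d : ℕ} {H : Matrix (Fin d) (Fin d) ℝ} (hH : H.PosDef)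
    {c : ℝ} (hc : 0 < c) : (c • H).PosDef := by
  refine PosDef.of_dotProduct_mulVec_pos ?_ ?_
  · unfold Matrix.IsHermitian
    rw [conjTranspose_smul, hH.isHermitian]
    simp
  · intro x hx
    rw [smul_mulVec, dotProduct_smul]
    simpa using mul_pos hc (hH.dotProduct_mulVec_pos hx)

private lemma combo_posDef_aux {d : ℕ} {H₁ H₂ : Matrix (Fin d) (Fin d) ℝ}
    (hH₁ : H₁.PosDef) (hH₂ : H₂.PosDef) {s : ℝ} (hs0 : 0 ≤ s) (hs1 : s ≤ 1) :
    ((1 - s) • H₁ + s • H₂).PosDef := by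
  rcases lt_or_eq_of_le hs1 with h | h
  · exact (smul_posDef_aux hH₁ (by linarith)).add_posSemidef (smul_posSemidef_aux hH₂ hs0)
  · subst h
    simpa using hH₂

private lemma sym_dot_aux {d : ℕ} {H : Matrix (Fin d) (Fin d) ℝ} (hH : Hᵀ = H)
    (x y : Fin d → ℝ) : x ⬝ᵥ H *ᵥ y = y ⬝ᵥ H *ᵥ x := by
  rw [dotProduct_mulVec, ← mulVec_transpose, hH, dotProduct_comm]

private lemma expand_quad_aux {d : ℕ} {H : Matrix (Fin d) (Fin d) ℝ} (hH : Hᵀ = H)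
    (a c : Fin d → ℝ) :
    (a - c) ⬝ᵥ H *ᵥ (a - c) = a ⬝ᵥ H *ᵥ a - 2 * (a ⬝ᵥ H *ᵥ c) + c ⬝ᵥ H *ᵥ c := by
  rw [mulVec_sub, dotProduct_sub, sub_dotProduct, sub_dotProduct, sym_dot_aux hH c a]
  ring

/-- Key: the weighted-sum minimizer is the strict minimizer of the weighted sum. -/
private lemma key_aux {d : ℕ} {H₁ H₂ : Matrix (Fin d) (Fin d) ℝ}
    (hH₁ : H₁.PosDef) (hH₂ : H₂.PosDef) (x₁ x₂ : Fin d → ℝ) {s : ℝ}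
    (hs0 : 0 ≤ s) (hs1 : s ≤ 1) {xs : Fin d → ℝ}
    (hxs : xs = ((1 - s) • H₁ + s • H₂)⁻¹.mulVec
      ((1 - s) • H₁.mulVec x₁ + s • H₂.mulVec x₂))
    (y : Fin d → ℝ) (hy : y ≠ xs) :
    (1 - s) * ((1 / 2) * ((xs - x₁) ⬝ᵥ H₁ *ᵥ (xs - x₁)))
      + s * ((1 / 2) * ((xs - x₂) ⬝ᵥ H₂ *ᵥ (xs - x₂)))
    < (1 - s) * ((1 / 2) * ((y - x₁) ⬝ᵥ H₁ *ᵥ (y - x₁)))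
      + s * ((1 / 2) * ((y - x₂) ⬝ᵥ H₂ *ᵥ (y - x₂))) := by
  set Hs := (1 - s) • H₁ + s • H₂ with hHs
  have hPD : Hs.PosDef := combo_posDef_aux hH₁ hH₂ hs0 hs1
  have hdet : IsUnit Hs.det := isUnit_iff_ne_zero.mpr hPD.det_pos.ne'
  have hb : Hs *ᵥ xs = (1 - s) • H₁.mulVec x₁ + s • H₂.mulVec x₂ := by
    rw [hxs, mulVec_mulVec, mul_nonsing_inv _ hdet, one_mulVec]
  -- scalar constraints
  have h1 : (1 - s) * (y ⬝ᵥ H₁ *ᵥ xs) + s * (y ⬝ᵥ H₂ *ᵥ xs)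
      = (1 - s) * (y ⬝ᵥ H₁ *ᵥ x₁) + s * (y ⬝ᵥ H₂ *ᵥ x₂) := by
    have := congrArg (fun v => y ⬝ᵥ v) hb
    simpa [hHs, add_mulVec, smul_mulVec, dotProduct_add, dotProduct_smul,
      smul_eq_mul] using this
  have h2 : (1 - s) * (xs ⬝ᵥ H₁ *ᵥ xs) + s * (xs ⬝ᵥ H₂ *ᵥ xs)
      = (1 - s) * (xs ⬝ᵥ H₁ *ᵥ x₁) + s * (xs ⬝ᵥ H₂ *ᵥ x₂) := by
    have := congrArg (fun v => xs ⬝ᵥ v) hb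
    simpa [hHs, add_mulVec, smul_mulVec, dotProduct_add, dotProduct_smul,
      smul_eq_mul] using this
  have hpos : 0 < (y - xs) ⬝ᵥ Hs *ᵥ (y - xs) :=
    by have := hPD.dotProduct_mulVec_pos (sub_ne_zero.mpr hy); rwa [star_trivial] at this
  have hHs1 : H₁ᵀ = H₁ := hH₁.isHermitian
  have hHs2 : H₂ᵀ = H₂ := hH₂.isHermitian
  have hexp : (y - xs) ⬝ᵥ Hs *ᵥ (y - xs)
      = (1 - s) * ((y - xs) ⬝ᵥ H₁ *ᵥ (y - xs)) + s * ((y - xs) ⬝ᵥ H₂ *ᵥ (y - xs)) := by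
    simp [hHs, add_mulVec, smul_mulVec, dotProduct_add, dotProduct_smul, smul_eq_mul]
  rw [hexp] at hpos
  rw [expand_quad_aux hHs1 y xs, expand_quad_aux hHs2 y xs] at hpos
  rw [expand_quad_aux hHs1 xs x₁, expand_quad_aux hHs2 xs x₂,
    expand_quad_aux hHs1 y x₁, expand_quad_aux hHs2 y x₂]
  have hsym1 : xs ⬝ᵥ H₁ *ᵥ y = y ⬝ᵥ H₁ *ᵥ xs := sym_dot_aux hHs1 xs y
  have hsym2 : xs ⬝ᵥ H₂ *ᵥ y = y ⬝ᵥ H₂ *ᵥ xs := sym_dot_aux hHs2 xs y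
  nlinarith [hpos, h1, h2]

/-- For convex-quadratic objectives with symmetric positive-definite
Hessians and distinct optima, any two distinct weighted-sum minimizers
`x_t*, x_{t'}*` (`t, t' ∈ [0,1]`) are mutually nondominated under `F = (f₁, f₂)`. -/
theorem weighted_sum_minimizers_mutually_nondominated {d : ℕ}
    (H₁ H₂ : Matrix (Fin d) (Fin d) ℝ) (hH₁ : H₁.PosDef) (hH₂ : H₂.PosDef)
    (x₁ x₂ : Fin d → ℝ) (hx : x₁ ≠ x₂) (y₁ y₂ : ℝ)
    (f₁ f₂ : (Fin d → ℝ) → ℝ)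
    (hf₁ : ∀ x, f₁ x = (1 / 2) * ((x - x₁) ⬝ᵥ H₁.mulVec (x - x₁)) + y₁)
    (hf₂ : ∀ x, f₂ x = (1 / 2) * ((x - x₂) ⬝ᵥ H₂.mulVec (x - x₂)) + y₂)
    (xt : ℝ → (Fin d → ℝ))
    (hxt : ∀ t, xt t = ((1 - t) • H₁ + t • H₂)⁻¹.mulVec
      ((1 - t) • H₁.mulVec x₁ + t • H₂.mulVec x₂))
    (t t' : ℝ) (ht : t ∈ Set.Icc (0 : ℝ) 1) (ht' : t' ∈ Set.Icc (0 : ℝ) 1)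
    (hne : xt t ≠ xt t') :
    ¬ (f₁ (xt t) ≤ f₁ (xt t') ∧ f₂ (xt t) ≤ f₂ (xt t') ∧
        (f₁ (xt t) < f₁ (xt t') ∨ f₂ (xt t) < f₂ (xt t'))) ∧
    ¬ (f₁ (xt t') ≤ f₁ (xt t) ∧ f₂ (xt t') ≤ f₂ (xt t) ∧
        (f₁ (xt t') < f₁ (xt t) ∨ f₂ (xt t') < f₂ (xt t))) := by
  obtain ⟨ht0, ht1⟩ := ht
  obtain ⟨ht'0, ht'1⟩ := ht'
  have key1 := key_aux hH₁ hH₂ x₁ x₂ ht'0 ht'1 (hxt t') (xt t) hne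
  have key2 := key_aux hH₁ hH₂ x₁ x₂ ht0 ht1 (hxt t) (xt t') hne.symm
  constructor
  · rintro ⟨h1, h2, -⟩
    rw [hf₁ (xt t), hf₁ (xt t')] at h1
    rw [hf₂ (xt t), hf₂ (xt t')] at h2
    have q1 := sub_le_sub_right h1 y₁
    have q2 := sub_le_sub_right h2 y₂
    simp only [add_sub_cancel_right] at q1 q2
    have := add_le_add (mul_le_mul_of_nonneg_left q1 (by linarith : (0:ℝ) ≤ 1 - t'))
      (mul_le_mul_of_nonneg_left q2 ht'0)
    linarith
  · rintro ⟨h1, h2, -⟩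
    rw [hf₁ (xt t), hf₁ (xt t')] at h1
    rw [hf₂ (xt t), hf₂ (xt t')] at h2
    have q1 := sub_le_sub_right h1 y₁
    have q2 := sub_le_sub_right h2 y₂
    simp only [add_sub_cancel_right] at q1 q2
    have := add_le_add (mul_le_mul_of_nonneg_left q1 (by linarith : (0:ℝ) ≤ 1 - t))
      (mul_le_mul_of_nonneg_left q2 ht0)
    linarith
end
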